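/- Let p be an odd prime and F a field of characteristic p containing F_{p^2}. Suppose u ∈ F satisfies u^p + u ≠ 0 and that u ∈ F_{p^2} \ K_-. Then for every α ∈ K_-, the polynomial X^p + X - (u+α)^{p+1}/(u^p + u) splits into p distinct linear factors over F_{p^2}, and every root lies in F_{p^2} \ K_-. -/

import Mathlib

open Polynomial
open scoped Classical

/-- For `K = 𝔽_{p²}`, `u ∈ K \ K₋` (i.e. `u^p + u ≠ 0`) and `α ∈ K₋`, the polynomial
`X^p + X - (u+α)^(p+1)/(u^p + u)` splits into `p` distinct linear factors over `K`
and every root lies in `K \ K₋`. -/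
theorem stmt_16 (p : ℕ) [Fact p.Prime] (hodd : Odd p)
    (u α : GaloisField p 2) (hu : u ^ p + u ≠ 0) (hα : α ^ p = -α) :
    (X ^ p + X - C ((u + α) ^ (p + 1) / (u ^ p + u))).Splits ∧
    (X ^ p + X - C ((u + α) ^ (p + 1) / (u ^ p + u))).roots.toFinset.card = p ∧
    ∀ η : GaloisField p 2,
      (X ^ p + X - C ((u + α) ^ (p + 1) / (u ^ p + u))).IsRoot η → η ^ p + η ≠ 0 := by
  have hp : p.Prime := Fact.out
  have hp1 : 1 < p := hp.one_lt
  haveI : Fintype (GaloisField p 2) := Fintype.ofFinite _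
  have hcard : Fintype.card (GaloisField p 2) = p ^ 2 := by
    rw [← Nat.card_eq_fintype_card]
    exact GaloisField.card p 2 (by norm_num)
  have hfrob2 : ∀ x : GaloisField p 2, x ^ p ^ 2 = x := by
    intro x
    rw [← hcard, FiniteField.pow_card]
  set c : GaloisField p 2 := (u + α) ^ (p + 1) / (u ^ p + u) with hc_def
  have huα : u + α ≠ 0 := by
    intro h
    have hu' : u = -α := by linear_combination h
    apply hu
    rw [hu', hodd.neg_pow, hα]
    ring
  have hc0 : c ≠ 0 := div_ne_zero (pow_ne_zero _ huα) hu
  have hcp : c ^ p = c := by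
    rw [hc_def, div_pow]
    have h1 : ((u + α) ^ (p + 1)) ^ p = (u + α) ^ (p + 1) := by
      rw [← pow_mul]
      have he : (p + 1) * p = p ^ 2 + p := by ring
      rw [he, pow_add, hfrob2, pow_succ]
      ring
    have h2 : (u ^ p + u) ^ p = u ^ p + u := by
      rw [add_pow_char, ← pow_mul, ← pow_two, hfrob2]
      ring
    rw [h1, h2]
  set f : (GaloisField p 2)[X] := X ^ p + X - C c with hf_def
  have hfdeg : f.natDegree = p := by
    have he : f = X ^ p + (X - C c) := by ring
    rw [he]
    compute_degree!
    · simp only [if_neg (by omega : ¬1 = p), if_neg (by omega : ¬p = 0)]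
      norm_num
    · omega
  have hfne : f ≠ 0 := by
    intro h
    rw [h, natDegree_zero] at hfdeg
    omega
  have hdvd : f ∣ (X ^ p ^ 2 - X : (GaloisField p 2)[X]) := by
    have hfp : f ^ p - f = (X : (GaloisField p 2)[X]) ^ p ^ 2 - X := by
      rw [hf_def, sub_pow_char, add_pow_char, ← C_pow, hcp, ← pow_mul, ← pow_two]
      ring
    rw [← hfp]
    refine ⟨f ^ (p - 1) - 1, ?_⟩
    rw [mul_sub, mul_one, ← pow_succ']
    congr 2
    omega
  have hbig_ne : (X ^ p ^ 2 - X : (GaloisField p 2)[X]) ≠ 0 := by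
    rw [← hcard]
    exact FiniteField.X_pow_card_sub_X_ne_zero _ Fintype.one_lt_card
  have hbig_splits : (X ^ p ^ 2 - X : (GaloisField p 2)[X]).Splits := by
    rw [splits_iff_card_roots, ← hcard, FiniteField.roots_X_pow_card_sub_X,
      FiniteField.X_pow_card_sub_X_natDegree_eq _ Fintype.one_lt_card]
    rw [← Finset.card_def, Finset.card_univ]
  have hsplits : f.Splits :=
    Splits.of_dvd hbig_splits hbig_ne hdvd
  have hsep : f.Separable := by
    have hder : f.derivative = 1 := by
      rw [hf_def]
      simp only [derivative_sub, derivative_add, derivative_X_pow, derivative_X, derivative_C]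
      rw [CharP.cast_eq_zero (GaloisField p 2) p]
      simp
    rw [Polynomial.Separable, hder]
    exact isCoprime_one_right
  refine ⟨hsplits, ?_, ?_⟩
  · rw [Multiset.toFinset_card_of_nodup (nodup_roots hsep),
      (splits_iff_card_roots (f := f)).mp hsplits, hfdeg]
  · intro η hη h
    have heval : η ^ p + η - c = 0 := by
      simpa [hf_def, IsRoot] using hη
    apply hc0
    rw [h] at heval
    linear_combination -heval
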